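/- arXiv:1102.2512 — 2 statements merged into one kernel-verified Lean document; each statement's English description precedes it below -/
import Mathlib

section
/- In a model category M, the class of weak equivalences satisfies the two-out-of-six property: for all composable morphisms r : X ⟶ Y, s : Y ⟶ Z, t : Z ⟶ T of M, if the composites s ∘ r and t ∘ s are weak equivalences, then r, s, t and t ∘ s ∘ r are weak equivalences. -/
open CategoryTheory

universe v u

/-- A class of morphisms is stable under retracts if whenever `f : X ⟶ Y` is a
retract of `g : X' ⟶ Y'` (in the arrow category) and `g` lies in the class,
then so does `f`. -/
def StableUnderRetracts {M : Type u} [Category.{v} M] (P : MorphismProperty M) : Prop :=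
  ∀ ⦃X Y X' Y' : M⦄ (f : X ⟶ Y) (g : X' ⟶ Y')
    (i : X ⟶ X') (r : X' ⟶ X) (i' : Y ⟶ Y') (r' : Y' ⟶ Y),
    i ≫ r = 𝟙 X → i' ≫ r' = 𝟙 Y → i ≫ g = f ≫ i' → r ≫ f = g ≫ r' → P g → P f

/-- A model category: a category with finite limits and colimits, together with
classes of weak equivalences, cofibrations and fibrations satisfying the
two-out-of-three, retract, lifting and factorization axioms. -/
class ModelCategory (M : Type u) [Category.{v} M] where
  weakEquivalences : MorphismProperty M
  cofibrations : MorphismProperty M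
  fibrations : MorphismProperty M
  hasFiniteLimits : Limits.HasFiniteLimits M
  hasFiniteColimits : Limits.HasFiniteColimits M
  twoOutOfThree : ∀ ⦃X Y Z : M⦄ (f : X ⟶ Y) (g : Y ⟶ Z),
    (weakEquivalences f → weakEquivalences g → weakEquivalences (f ≫ g)) ∧
    (weakEquivalences (f ≫ g) → weakEquivalences f → weakEquivalences g) ∧
    (weakEquivalences (f ≫ g) → weakEquivalences g → weakEquivalences f)
  weakEquivalences_retract : StableUnderRetracts weakEquivalences
  cofibrations_retract : StableUnderRetracts cofibrations
  fibrations_retract : StableUnderRetracts fibrations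
  lifting_trivialCofibration_fibration : ∀ ⦃A B X Y : M⦄ (i : A ⟶ B) (p : X ⟶ Y),
    cofibrations i → weakEquivalences i → fibrations p → HasLiftingProperty i p
  lifting_cofibration_trivialFibration : ∀ ⦃A B X Y : M⦄ (i : A ⟶ B) (p : X ⟶ Y),
    cofibrations i → fibrations p → weakEquivalences p → HasLiftingProperty i p
  factorization_trivialCofibration_fibration : ∀ ⦃X Y : M⦄ (f : X ⟶ Y),
    ∃ (Z : M) (i : X ⟶ Z) (p : Z ⟶ Y),
      cofibrations i ∧ weakEquivalences i ∧ fibrations p ∧ i ≫ p = f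
  factorization_cofibration_trivialFibration : ∀ ⦃X Y : M⦄ (f : X ⟶ Y),
    ∃ (Z : M) (i : X ⟶ Z) (p : Z ⟶ Y),
      cofibrations i ∧ fibrations p ∧ weakEquivalences p ∧ i ≫ p = f

namespace TwoOutOfSixAux

open ModelCategory Limits

variable {M : Type u} [Category.{v} M] [ModelCategory M]

lemma W_comp {X Y Z : M} {f : X ⟶ Y} {g : Y ⟶ Z} (hf : weakEquivalences f)
    (hg : weakEquivalences g) : weakEquivalences (f ≫ g) :=
  (twoOutOfThree f g).1 hf hg

lemma W_cancel_left {X Y Z : M} {f : X ⟶ Y} {g : Y ⟶ Z} (h : weakEquivalences (f ≫ g))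
    (hf : weakEquivalences f) : weakEquivalences g :=
  (twoOutOfThree f g).2.1 h hf

lemma W_cancel_right {X Y Z : M} {f : X ⟶ Y} {g : Y ⟶ Z} (h : weakEquivalences (f ≫ g))
    (hg : weakEquivalences g) : weakEquivalences f :=
  (twoOutOfThree f g).2.2 h hg

lemma W_id (X : M) : weakEquivalences (𝟙 X) := by
  obtain ⟨Z, i, p, _hic, hiw, _hpf, hfac⟩ := factorization_trivialCofibration_fibration (𝟙 X)
  have h1 : weakEquivalences (i ≫ (p ≫ i)) := by
    rw [← Category.assoc, hfac, Category.id_comp]; exact hiw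
  have h2 : weakEquivalences (p ≫ i) := W_cancel_left h1 hiw
  have hp : weakEquivalences p := W_cancel_right h2 hiw
  rw [← hfac]; exact W_comp hiw hp

/-- If `u ≫ v = 𝟙` and `v ≫ u` is a weak equivalence, then `v` is a weak
equivalence, since it is a retract of `v ≫ u`. -/
lemma W_of_split {A B : M} (u : A ⟶ B) (v : B ⟶ A) (huv : u ≫ v = 𝟙 A)
    (h : weakEquivalences (v ≫ u)) : weakEquivalences v := by
  refine weakEquivalences_retract v (v ≫ u) (𝟙 B) (𝟙 B) u v (Category.id_comp _) huv
    (by rw [Category.id_comp]) ?_ h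
  rw [Category.id_comp, Category.assoc, huv, Category.comp_id]

lemma cof_comp {A B C : M} {i : A ⟶ B} {j : B ⟶ C} (hi : cofibrations i)
    (hj : cofibrations j) : cofibrations (i ≫ j) := by
  obtain ⟨D, a, q, hac, hqf, hqw, hfac⟩ := factorization_cofibration_trivialFibration (i ≫ j)
  haveI := lifting_cofibration_trivialFibration i q hi hqf hqw
  haveI := lifting_cofibration_trivialFibration j q hj hqf hqw
  have sq : CommSq a (i ≫ j) q (𝟙 C) := ⟨by rw [hfac, Category.comp_id]⟩
  refine cofibrations_retract (i ≫ j) a (𝟙 A) (𝟙 A) sq.lift q (Category.id_comp _)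
    sq.fac_right ?_ ?_ hac
  · rw [Category.id_comp, sq.fac_left]
  · rw [Category.id_comp, hfac]

lemma fib_comp {A B C : M} {p : A ⟶ B} {q : B ⟶ C} (hp : fibrations p)
    (hq : fibrations q) : fibrations (p ≫ q) := by
  obtain ⟨D, j, f, hjc, hjw, hff, hfac⟩ := factorization_trivialCofibration_fibration (p ≫ q)
  haveI := lifting_trivialCofibration_fibration j p hjc hjw hp
  haveI := lifting_trivialCofibration_fibration j q hjc hjw hq
  have sq : CommSq (𝟙 A) j (p ≫ q) f := ⟨by rw [Category.id_comp, hfac]⟩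
  refine fibrations_retract (p ≫ q) f j sq.lift (𝟙 C) (𝟙 C) sq.fac_left
    (Category.id_comp _) ?_ ?_ hff
  · rw [Category.comp_id, hfac]
  · rw [Category.comp_id, sq.fac_right]

/-- The heart of the two-out-of-six property: if `s` and `t` are fibrations,
the codomain of `s` is cofibrant, and `r ≫ s`, `s ≫ t` are weak equivalences,
then `s` is a weak equivalence. -/
lemma key_fib {X Y Z T : M} (r : X ⟶ Y) (s : Y ⟶ Z) (t : Z ⟶ T)
    (hs : fibrations s) (ht : fibrations t)
    [HasInitial M] (hZ : cofibrations (initial.to Z))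
    (hrs : weakEquivalences (r ≫ s)) (hst : weakEquivalences (s ≫ t)) :
    weakEquivalences s := by
  haveI : HasFiniteColimits M := hasFiniteColimits
  -- factor `r ≫ s` as a cofibration `a` followed by a trivial fibration `b`
  obtain ⟨G, a, b, hac, hbf, hbw, hab⟩ := factorization_cofibration_trivialFibration (r ≫ s)
  have haw : weakEquivalences a := W_cancel_right (by rw [hab]; exact hrs) hbw
  -- lift `g₁ : G ⟶ Y` of `b` through `s`
  haveI := lifting_trivialCofibration_fibration a s hac haw hs
  have sq1 : CommSq r a s b := ⟨by rw [hab]⟩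
  -- a section `β` of the trivial fibration `b`, using cofibrancy of `Z`
  haveI := lifting_cofibration_trivialFibration (initial.to Z) b hZ hbf hbw
  have sq2 : CommSq (initial.to G) (initial.to Z) b (𝟙 Z) := ⟨initial.hom_ext _ _⟩
  -- `σ` is a genuine section of `s`
  set σ : Z ⟶ Y := sq2.lift ≫ sq1.lift with hσdef
  have hσs : σ ≫ s = 𝟙 Z := by
    rw [hσdef, Category.assoc, sq1.fac_right, sq2.fac_right]
  -- a cylinder object for `Y`
  obtain ⟨Cy, inc, π, hincc, hπf, hπw, hfacC⟩ :=
    factorization_cofibration_trivialFibration (coprod.desc (𝟙 Y) (𝟙 Y))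
  have hin0 : (coprod.inl ≫ inc) ≫ π = 𝟙 Y := by
    rw [Category.assoc, hfacC, coprod.inl_desc]
  have hin1 : (coprod.inr ≫ inc) ≫ π = 𝟙 Y := by
    rw [Category.assoc, hfacC, coprod.inr_desc]
  have hin0w : weakEquivalences (coprod.inl ≫ inc) :=
    W_cancel_right (by rw [hin0]; exact W_id Y) hπw
  have hin1w : weakEquivalences (coprod.inr ≫ inc) :=
    W_cancel_right (by rw [hin1]; exact W_id Y) hπw
  -- `s ≫ t` is a trivial fibration, so the homotopy `H : 𝟙 Y ≃ s ≫ σ` lifts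
  haveI := lifting_cofibration_trivialFibration inc (s ≫ t) hincc (fib_comp hs ht) hst
  have hin0a : ∀ {W' : M} (k : Y ⟶ W'), coprod.inl ≫ inc ≫ π ≫ k = k := by
    intro W' k
    rw [← Category.assoc, ← Category.assoc, hin0, Category.id_comp]
  have hin1a : ∀ {W' : M} (k : Y ⟶ W'), coprod.inr ≫ inc ≫ π ≫ k = k := by
    intro W' k
    rw [← Category.assoc, ← Category.assoc, hin1, Category.id_comp]
  have e1 : ∀ {W' : M} (k : Z ⟶ W'), sq1.lift ≫ s ≫ k = b ≫ k := by
    intro W' k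
    rw [← Category.assoc, sq1.fac_right]
  have e2 : ∀ {W' : M} (k : Z ⟶ W'), sq2.lift ≫ b ≫ k = k := by
    intro W' k
    rw [← Category.assoc, sq2.fac_right, Category.id_comp]
  have sq3 : CommSq (coprod.desc (𝟙 Y) (s ≫ σ)) inc (s ≫ t) (π ≫ (s ≫ t)) := by
    constructor
    apply coprod.hom_ext
    · simp only [Category.assoc, hin0a, coprod.inl_desc_assoc, Category.id_comp]
    · simp only [Category.assoc, hin1a, coprod.inr_desc_assoc, hσdef, e1, e2]
  -- the homotopy is a weak equivalence, hence so is `s ≫ σ`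
  have hH : weakEquivalences sq3.lift := by
    have h0 : (coprod.inl ≫ inc) ≫ sq3.lift = 𝟙 Y := by
      rw [Category.assoc, sq3.fac_left, coprod.inl_desc]
    exact W_cancel_left (by rw [h0]; exact W_id Y) hin0w
  have hsσ : weakEquivalences (s ≫ σ) := by
    have h1 : (coprod.inr ≫ inc) ≫ sq3.lift = s ≫ σ := by
      rw [Category.assoc, sq3.fac_left, coprod.inr_desc]
    rw [← h1]; exact W_comp hin1w hH
  -- finally, `s` is a retract of `s ≫ σ`
  exact W_of_split σ s hσs hsσ

/-- Two-out-of-six for a cofibrant `Z`, with no condition on `s`, `t`. -/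
lemma key {X Y Z T : M} (r : X ⟶ Y) (s : Y ⟶ Z) (t : Z ⟶ T)
    [HasInitial M] (hZ : cofibrations (initial.to Z))
    (hrs : weakEquivalences (r ≫ s)) (hst : weakEquivalences (s ≫ t)) :
    weakEquivalences s := by
  obtain ⟨N, t₁, t₂, ht₁c, ht₁w, ht₂f, hft⟩ := factorization_trivialCofibration_fibration t
  have hN : cofibrations (initial.to N) := by
    have e : initial.to N = initial.to Z ≫ t₁ := initial.hom_ext _ _
    rw [e]; exact cof_comp hZ ht₁c
  obtain ⟨Mid, m₁, m₂, hm₁c, hm₁w, hm₂f, hfm⟩ :=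
    factorization_trivialCofibration_fibration (s ≫ t₁)
  have h1 : weakEquivalences ((r ≫ m₁) ≫ m₂) := by
    rw [Category.assoc, hfm, ← Category.assoc]
    exact W_comp hrs ht₁w
  have h2 : weakEquivalences (m₂ ≫ t₂) := by
    refine W_cancel_left (f := m₁) ?_ hm₁w
    rw [← Category.assoc, hfm, Category.assoc, hft]
    exact hst
  have hm₂ : weakEquivalences m₂ := key_fib (r ≫ m₁) m₂ t₂ hm₂f ht₂f hN h1 h2
  have h3 : weakEquivalences (s ≫ t₁) := by rw [← hfm]; exact W_comp hm₁w hm₂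
  exact W_cancel_right h3 ht₁w

end TwoOutOfSixAux

/-- In a model category, the weak equivalences satisfy the two-out-of-six
property. -/
theorem weakEquivalences_twoOutOfSix {M : Type u} [Category.{v} M] [ModelCategory M] :
    ∀ ⦃X Y Z T : M⦄ (r : X ⟶ Y) (s : Y ⟶ Z) (t : Z ⟶ T),
      ModelCategory.weakEquivalences (r ≫ s) → ModelCategory.weakEquivalences (s ≫ t) →
      ModelCategory.weakEquivalences r ∧ ModelCategory.weakEquivalences s ∧
        ModelCategory.weakEquivalences t ∧ ModelCategory.weakEquivalences (r ≫ s ≫ t) := by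
  intro X Y Z T r s t hrs hst
  open ModelCategory Limits TwoOutOfSixAux in
  haveI : Limits.HasFiniteColimits M := ModelCategory.hasFiniteColimits
  have hs : ModelCategory.weakEquivalences s := by
    open ModelCategory Limits TwoOutOfSixAux in
    -- cofibrant replacements of all four objects
    obtain ⟨Xc, iX, pX, hiX, hpXf, hpXw, hXf⟩ :=
      factorization_cofibration_trivialFibration (initial.to X)
    obtain ⟨Yc, iY, pY, hiY, hpYf, hpYw, hYf⟩ :=
      factorization_cofibration_trivialFibration (initial.to Y)
    obtain ⟨Zc, iZ, pZ, hiZ, hpZf, hpZw, hZf⟩ :=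
      factorization_cofibration_trivialFibration (initial.to Z)
    have hXc : cofibrations (initial.to Xc) := by
      have e : initial.to Xc = iX := initial.hom_ext _ _
      rw [e]; exact hiX
    have hZc : cofibrations (initial.to Zc) := by
      have e : initial.to Zc = iZ := initial.hom_ext _ _
      rw [e]; exact hiZ
    have hYc : cofibrations (initial.to Yc) := by
      have e : initial.to Yc = iY := initial.hom_ext _ _
      rw [e]; exact hiY
    -- lift the maps to the cofibrant replacements
    haveI := lifting_cofibration_trivialFibration (initial.to Xc) pY hXc hpYf hpYw
    have sqr : CommSq (initial.to Yc) (initial.to Xc) pY (pX ≫ r) := ⟨initial.hom_ext _ _⟩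
    haveI := lifting_cofibration_trivialFibration (initial.to Yc) pZ hYc hpZf hpZw
    have sqs : CommSq (initial.to Zc) (initial.to Yc) pZ (pY ≫ s) := ⟨initial.hom_ext _ _⟩
    -- transfer the hypotheses to the cofibrant replacements
    have e1 : (sqr.lift ≫ sqs.lift) ≫ pZ = pX ≫ (r ≫ s) := by
      rw [Category.assoc, sqs.fac_right, ← Category.assoc, sqr.fac_right, Category.assoc]
    have hrcsc : weakEquivalences (sqr.lift ≫ sqs.lift) :=
      W_cancel_right (by rw [e1]; exact W_comp hpXw hrs) hpZw
    have hsctc : weakEquivalences (sqs.lift ≫ (pZ ≫ t)) := by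
      rw [← Category.assoc, sqs.fac_right, Category.assoc]
      exact W_comp hpYw hst
    have hsc : weakEquivalences sqs.lift :=
      key sqr.lift sqs.lift (pZ ≫ t) hZc hrcsc hsctc
    have e2 : sqs.lift ≫ pZ = pY ≫ s := sqs.fac_right
    have h3 : weakEquivalences (pY ≫ s) := by rw [← e2]; exact W_comp hsc hpZw
    exact W_cancel_left h3 hpYw
  refine ⟨TwoOutOfSixAux.W_cancel_right hrs hs, hs, TwoOutOfSixAux.W_cancel_left hst hs, ?_⟩
  exact TwoOutOfSixAux.W_comp (TwoOutOfSixAux.W_cancel_right hrs hs) hst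
end

section
/- (Functor categories inherit the functorial factorization.) Let C be a category and let W, U, V be classes of morphisms of C with U ⊆ W and V ⊆ W, equipped with a functorial factorization of the morphisms of W: an assignment to each morphism w : X ⟶ Y in W of an object F(w) and a factorization w = v(w) ∘ u(w) with u(w) : X ⟶ F(w) in U and v(w) : F(w) ⟶ Y in V, natural with respect to all commutative squares in C between morphisms of W. Let A be any category. Then every natural transformation η : F ⟶ G between functors F, G : A ⥤ C all of whose components lie in W admits a factorization η = β ∘ α through a functor H : A ⥤ C, where every component of α : F ⟶ H lies in U and every component of β : H ⟶ G lies in V. -/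
open CategoryTheory

universe v u v' u'

/-- A functorial factorization of the morphisms of `W` as a morphism of `U` followed
by a morphism of `V`: a functor `Z` on the full subcategory of the arrow category of
`C` spanned by the arrows lying in `W`, together with natural transformations from the
source functor to `Z` (with components in `U`) and from `Z` to the target functor
(with components in `V`) whose composite is the given arrow. -/
structure FunctorialFactorization {C : Type u} [Category.{v} C]
    (W U V : MorphismProperty C) where
  Z : ObjectProperty.FullSubcategory (fun f : Arrow C => W f.hom) ⥤ C
  u : ObjectProperty.ι (fun f : Arrow C => W f.hom) ⋙ Arrow.leftFunc ⟶ Z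
  v : Z ⟶ ObjectProperty.ι (fun f : Arrow C => W f.hom) ⋙ Arrow.rightFunc
  hu : ∀ w, U (u.app w)
  hv : ∀ w, V (v.app w)
  fac : ∀ w, u.app w ≫ v.app w = w.obj.hom

/-- Functor categories inherit the functorial factorization: if the morphisms of `W`
factor functorially as a morphism of `U` followed by a morphism of `V`, then every
natural transformation `η : F ⟶ G` between functors `A ⥤ C` all of whose components
lie in `W` factors as `α ≫ β` through a functor `H`, where all components of `α`
lie in `U` and all components of `β` lie in `V`. -/
theorem functorCategory_inherits_factorization {C : Type u} [Category.{v} C]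
    (W U V : MorphismProperty C) (hUW : U ≤ W) (hVW : V ≤ W)
    (FF : FunctorialFactorization W U V)
    (A : Type u') [Category.{v'} A] (F G : A ⥤ C) (η : F ⟶ G)
    (hη : ∀ a : A, W (η.app a)) :
    ∃ (H : A ⥤ C) (α : F ⟶ H) (β : H ⟶ G),
      (∀ a : A, U (α.app a)) ∧ (∀ a : A, V (β.app a)) ∧ α ≫ β = η := by
  let D : A ⥤ ObjectProperty.FullSubcategory (fun f : Arrow C => W f.hom) :=
    { obj := fun a => ⟨Arrow.mk (η.app a), hη a⟩
      map := fun {a b} f => ObjectProperty.homMk (Arrow.homMk (u := F.map f) (v := G.map f) (η.naturality f))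
      map_id := fun a => by apply ObjectProperty.hom_ext; apply CommaMorphism.ext <;> simp <;> rfl
      map_comp := fun f g => by apply ObjectProperty.hom_ext; apply CommaMorphism.ext <;> simp <;> rfl }
  refine ⟨D ⋙ FF.Z,
    { app := fun a => FF.u.app (D.obj a)
      naturality := fun a b f => FF.u.naturality (D.map f) },
    { app := fun a => FF.v.app (D.obj a)
      naturality := fun a b f => FF.v.naturality (D.map f) },
    fun a => FF.hu _, fun a => FF.hv _, ?_⟩
  ext a
  exact FF.fac (D.obj a)
end
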